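/- Let $X$ be a metric space, $x \in X$, and $u : X \to (-\infty, +\infty]$ lower semicontinuous at $x$ with $u(x) < \infty$. Let $(\nu_r)_{r>0}$ be a family of finite positive Borel measures on $X$ such that: (i) $\nu_r(X) \to 1$ as $r \to 0$; (ii) for every $\delta > 0$ there exists $\bar r > 0$ such that $\operatorname{supp}\nu_r \subseteq B(x,\delta)$ for all $0 < r \le \bar r$; and (iii) $\int_X u\, d\nu_r \le u(x)\,\nu_r(X)$ for all $r > 0$. Then $\lim_{r \to 0} \int_X u\, d\nu_r = u(x)$. -/
import Mathlib


open MeasureTheory Filter Set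

/-- If `u` is lower semicontinuous at `x`, and `(ν_r)` is a family of finite measures with
total mass tending to `1`, supports shrinking to `x`, and satisfying the sub-mean-value
property `∫ u dν_r ≤ u(x) ν_r(X)`, then the averages `∫ u dν_r` converge to `u(x)` as
`r → 0⁺`. -/
theorem shrinking_averages_tendsto_of_lsc {X : Type*} [MetricSpace X] [MeasurableSpace X]
    (x : X) (u : X → ℝ) (hlsc : LowerSemicontinuousAt u x)
    (ν : ℝ → Measure X) (hfin : ∀ r, IsFiniteMeasure (ν r))
    (hmass : Tendsto (fun r => (ν r univ).toReal) (nhdsWithin 0 (Ioi 0)) (nhds 1))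
    (hsupp : ∀ δ > (0 : ℝ), ∃ rbar > (0 : ℝ), ∀ r, 0 < r → r ≤ rbar →
      ν r (Metric.ball x δ)ᶜ = 0)
    (hint : ∀ r > (0 : ℝ), Integrable u (ν r))
    (hsub : ∀ r > (0 : ℝ), ∫ y, u y ∂ν r ≤ u x * (ν r univ).toReal) :
    Tendsto (fun r => ∫ y, u y ∂ν r) (nhdsWithin 0 (Ioi 0)) (nhds (u x)) := by
  rw [tendsto_order]
  constructor
  · -- lower bound
    intro a ha
    set ε := (u x - a) / 2 with hεdef
    have hεpos : 0 < ε := by simp [hεdef]; linarith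
    have hlt : u x - ε < u x := by linarith
    obtain ⟨δ, hδpos, hδ⟩ := Metric.eventually_nhds_iff_ball.mp (hlsc _ hlt)
    obtain ⟨rbar, hrbar, hrb⟩ := hsupp δ hδpos
    have hmass' : Tendsto (fun r => (u x - ε) * (ν r univ).toReal)
        (nhdsWithin 0 (Ioi 0)) (nhds ((u x - ε) * 1)) := hmass.const_mul _
    have hev1 : ∀ᶠ r in nhdsWithin 0 (Ioi 0), a < (u x - ε) * (ν r univ).toReal :=
      hmass'.eventually (eventually_gt_nhds (by rw [mul_one]; linarith))
    have hev2 : ∀ᶠ r in nhdsWithin 0 (Ioi 0), r ∈ Ioc (0:ℝ) rbar :=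
      Ioc_mem_nhdsGT_of_mem ⟨le_refl 0, hrbar⟩
    filter_upwards [hev1, hev2] with r h1 h2
    haveI := hfin r
    have hnull : ν r {y | ¬ (u x - ε ≤ u y)} = 0 := by
      apply measure_mono_null _ (hrb r h2.1 h2.2)
      intro y hy
      simp only [mem_setOf_eq, not_le] at hy
      intro hball
      exact absurd (hδ y hball) (by simpa using hy.not_gt)
    have hae : ∀ᵐ y ∂ν r, u x - ε ≤ u y := hnull
    have hle : ∫ y, (u x - ε) ∂ν r ≤ ∫ y, u y ∂ν r :=
      integral_mono_ae (integrable_const _) (hint r h2.1) hae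
    rw [integral_const, smul_eq_mul] at hle
    calc a < (u x - ε) * (ν r univ).toReal := h1
      _ = (ν r univ).toReal * (u x - ε) := mul_comm _ _
      _ ≤ _ := hle
  · -- upper bound
    intro a ha
    have hmass' : Tendsto (fun r => u x * (ν r univ).toReal)
        (nhdsWithin 0 (Ioi 0)) (nhds (u x * 1)) := hmass.const_mul _
    have hev1 : ∀ᶠ r in nhdsWithin 0 (Ioi 0), u x * (ν r univ).toReal < a :=
      hmass'.eventually (eventually_lt_nhds (by rwa [mul_one]))
    have hev2 : ∀ᶠ r in nhdsWithin 0 (Ioi 0), r ∈ Ioi (0:ℝ) := self_mem_nhdsWithin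
    filter_upwards [hev1, hev2] with r h1 h2
    exact lt_of_le_of_lt (hsub r h2) h1
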